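/- Let H ≤ K be subgroups of a free group F. The following are equivalent: (a) H is contained in no proper free factor of K; (b) every element of K is K-algebraic over H (i.e. H ≤alg K); (c) there exists a subset X ⊆ K such that K is generated by H ∪ X and every x ∈ X is K-algebraic over H. -/
import Mathlib


/-! Common definitions: free factors, algebraic extensions, rank, etc.,
following Miasnikov–Ventura–Weil, "Algebraic extensions in free groups". -/

section Defs

variable {G : Type*} [Group G]

/-- `H` is a free factor of `K` (`H ≤ff K`): there is a subgroup `L` such that the
homomorphism from the external free product `H ∗ L` to `G` induced by the inclusions
is injective with image `K`. -/
def IsFreeFactor (H K : Subgroup G) : Prop :=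
  ∃ L : Subgroup G,
    Function.Injective ⇑(Monoid.Coprod.lift H.subtype L.subtype) ∧
    (Monoid.Coprod.lift H.subtype L.subtype).range = K

/-- `x` is `K`-algebraic over `H`: `x` belongs to every free factor of `K` containing `H`. -/
def IsAlgebraicOver (H K : Subgroup G) (x : G) : Prop :=
  ∀ L : Subgroup G, IsFreeFactor L K → H ≤ L → x ∈ L

/-- The extension `H ≤ K` is algebraic (`H ≤alg K`). -/
def IsAlgebraicExt (H K : Subgroup G) : Prop :=
  H ≤ K ∧ ∀ x ∈ K, IsAlgebraicOver H K x

/-- The rank of a subgroup: minimal number of generators, as an extended natural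
(`⊤` if the subgroup is not finitely generated). For finitely generated subgroups of
free groups this is the rank of a basis. -/
noncomputable def grpRank (H : Subgroup G) : ℕ∞ :=
  ⨅ (S : Finset G) (_ : Subgroup.closure (S : Set G) = H), (S.card : ℕ∞)

/-- `H ≤ealg K`: the extension splits as a finite chain of extensions, each of which
is both elementary and algebraic. -/
def IsEAlgebraicExt (H K : Subgroup G) : Prop :=
  Relation.ReflTransGen
    (fun A B : Subgroup G => (∃ x : G, B = A ⊔ Subgroup.zpowers x) ∧ IsAlgebraicExt A B) H K

/-- A Takahasi family for `H`: a set of subgroups, each containing `H`, such that every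
extension of `H` admits a member of the family as a free factor. -/
def IsTakahasiFamily (H : Subgroup G) (𝓛 : Set (Subgroup G)) : Prop :=
  (∀ L ∈ 𝓛, H ≤ L) ∧ ∀ K : Subgroup G, H ≤ K → ∃ L ∈ 𝓛, IsFreeFactor L K

end Defs

lemma le_of_isFreeFactor {G : Type*} [Group G] {L K : Subgroup G}
    (h : IsFreeFactor L K) : L ≤ K := by
  rintro l hl
  obtain ⟨M, -, hr⟩ := h
  rw [← hr]
  exact ⟨Monoid.Coprod.inl ⟨l, hl⟩, by simp⟩

/-- Characterizations of algebraic extensions: (a) `H` is contained in no proper free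
factor of `K`; (b) `H ≤alg K`; (c) `K` is generated by `H ∪ X` with every `x ∈ X`
`K`-algebraic over `H`. -/
theorem algebraicExt_tfae {G : Type*} [Group G] [IsFreeGroup G]
    (H K : Subgroup G) (hHK : H ≤ K) :
    ((¬ ∃ L : Subgroup G, IsFreeFactor L K ∧ L ≠ K ∧ H ≤ L) ↔ IsAlgebraicExt H K) ∧
    (IsAlgebraicExt H K ↔
      ∃ X : Set G, X ⊆ (K : Set G) ∧ K = Subgroup.closure ((H : Set G) ∪ X) ∧
        ∀ x ∈ X, IsAlgebraicOver H K x) := by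
  constructor
  · constructor
    · intro hno
      refine ⟨hHK, fun x hx L hL hHL => ?_⟩
      by_cases h : L = K
      · exact h ▸ hx
      · exact absurd ⟨L, hL, h, hHL⟩ hno
    · rintro ⟨-, halg⟩ ⟨L, hL, hne, hHL⟩
      exact hne (le_antisymm (le_of_isFreeFactor hL) fun k hk => halg k hk L hL hHL)
  · constructor
    · rintro ⟨hle, halg⟩
      refine ⟨(K : Set G), le_refl _, ?_, fun x hx => halg x hx⟩
      rw [Set.union_eq_self_of_subset_left hHK, Subgroup.closure_eq]
    · rintro ⟨X, hXK, hKcl, halgX⟩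
      refine ⟨hHK, fun x hx L hL hHL => ?_⟩
      have hsub : (H : Set G) ∪ X ⊆ (L : Set G) :=
        Set.union_subset hHL fun y hy => halgX y hy L hL hHL
      have : K ≤ L := hKcl ▸ (Subgroup.closure_le L).mpr hsub
      exact this hx
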